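/- Let Σ be a finite alphabet and f : Σ* → ℝ. If the rank of the Hankel matrix of f is a finite number r, then there exists a linear representation (α₀, (M_σ)_{σ∈Σ}, α∞) of dimension exactly r computing f, i.e., f(w) = α₀ᵀ M_w α∞ for all strings w. -/

import Mathlib

open Matrix

/-- The ordered product `M_w = M_{σ₁} ⋯ M_{σₙ}` for a string `w = σ₁…σₙ`. -/
def wordProd {Γ : Type*} {r : ℕ} (M : Γ → Matrix (Fin r) (Fin r) ℝ) (w : List Γ) :
    Matrix (Fin r) (Fin r) ℝ :=
  (w.map M).prod

/-- The rank of the Hankel matrix of `f`: the dimension of the span of its rows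
`v ↦ f (u ++ v)` inside the space of functions `Γ* → ℝ`. -/
noncomputable def hankelRank {Γ : Type*} (f : List Γ → ℝ) : Cardinal :=
  Module.rank ℝ
    ↥(Submodule.span ℝ (Set.range fun u : List Γ => fun v : List Γ => f (u ++ v)))

theorem statement2 {Γ : Type*} [Fintype Γ] (f : List Γ → ℝ) (r : ℕ)
    (hrank : hankelRank f = r) :
    ∃ (α₀ αω : Fin r → ℝ) (M : Γ → Matrix (Fin r) (Fin r) ℝ),
      ∀ w : List Γ, f w = α₀ ⬝ᵥ (wordProd M w).mulVec αω := by
  classical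
  set V := Submodule.span ℝ (Set.range fun u : List Γ => fun v : List Γ => f (u ++ v))
    with hV
  have hrank' : Module.rank ℝ V = r := hrank
  have hfin : Module.Finite ℝ V := Module.finite_of_rank_eq_nat hrank'
  have hfr : Module.finrank ℝ V = r := Module.finrank_eq_of_rank_eq hrank'
  have hmem : ∀ u : List Γ, (fun v => f (u ++ v)) ∈ V := fun u =>
    Submodule.subset_span ⟨u, rfl⟩
  let row : List Γ → V := fun u => ⟨fun v => f (u ++ v), hmem u⟩
  let S : Γ → (List Γ → ℝ) →ₗ[ℝ] (List Γ → ℝ) := fun σ =>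
    { toFun := fun g v => g (σ :: v)
      map_add' := fun g h => rfl
      map_smul' := fun c g => rfl }
  have hS : ∀ σ : Γ, ∀ x ∈ V, S σ x ∈ V := by
    intro σ x hx
    have : V.map (S σ) ≤ V := by
      rw [hV, Submodule.map_span, Submodule.span_le]
      rintro y ⟨_, ⟨u, rfl⟩, rfl⟩
      exact Submodule.subset_span ⟨u ++ [σ], by funext v; simp [S]⟩
    exact this (Submodule.mem_map_of_mem hx)
  let T : Γ → V →ₗ[ℝ] V := fun σ => (S σ).restrict (hS σ)
  let b : Module.Basis (Fin r) ℝ V := Module.finBasisOfFinrankEq ℝ V hfr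
  let M : Γ → Matrix (Fin r) (Fin r) ℝ := fun σ => Matrix.of fun j i => b.repr (T σ (b j)) i
  let α₀ : Fin r → ℝ := fun i => b.repr (row []) i
  let αω : Fin r → ℝ := fun i => (b i : List Γ → ℝ) []
  have key1 : ∀ (σ : Γ) (x : V),
      vecMul (fun j => (b.repr x j : ℝ)) (M σ) = fun i => b.repr (T σ x) i := by
    intro σ x
    funext i
    conv_rhs => rw [← b.sum_repr x]
    simp [vecMul, dotProduct, M, map_sum, Finsupp.finset_sum_apply, -Module.Basis.sum_repr]
  have key2 : ∀ x : V, (fun i => (b.repr x i : ℝ)) ⬝ᵥ αω = (x : List Γ → ℝ) [] := by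
    intro x
    conv_rhs => rw [← b.sum_repr x]
    simp [dotProduct, αω, Submodule.coe_sum, Finset.sum_apply, -Module.Basis.sum_repr]
  have key3 : ∀ w : List Γ, vecMul α₀ (wordProd M w) = fun i => (b.repr (row w) i : ℝ) := by
    intro w
    induction w using List.reverseRecOn with
    | nil => simp [wordProd, α₀, vecMul_one]
    | append_singleton w σ ih =>
        have hprod : wordProd M (w ++ [σ]) = wordProd M w * M σ := by
          simp [wordProd]
        have hrow : T σ (row w) = row (w ++ [σ]) := by
          apply Subtype.ext
          funext v
          simp [T, S, row, LinearMap.restrict_apply]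
        rw [hprod, ← vecMul_vecMul, ih, key1, hrow]
  refine ⟨α₀, αω, M, fun w => ?_⟩
  have h1 : f w = (row w : List Γ → ℝ) [] := by simp [row]
  rw [h1, ← key2 (row w), ← key3 w, dotProduct_mulVec]
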